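/- Let T_3 be the 3-comb, i.e., the tree obtained from a 3-vertex path a b c by adding three new vertices a', b', c' and the edges aa', bb', cc', and let R = {a', b', c'} be its set of leaves. Then the rooted tree (T_3, R) is balanced and ρ_{T_3} = 5/3. -/
import Mathlib


open SimpleGraph

/-- `e(S)`: the number of edges of `T` with at least one endpoint in `S`. -/
noncomputable def edgesTouching {V : Type*} (T : SimpleGraph V) (S : Set V) : ℕ :=
  {e ∈ T.edgeSet | ∃ v ∈ S, v ∈ e}.ncard

/-- The density `ρ_S = e(S) / |S|`. -/
noncomputable def rho {V : Type*} (T : SimpleGraph V) (S : Set V) : ℝ :=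
  (edgesTouching T S : ℝ) / (S.ncard : ℝ)

/-- The 3-comb `T₃`: the path `inr (0,0) — inr (0,1) — inr (0,2)` (playing the roles of
`a, b, c`) together with the pendant leaves `inl 0, inl 1, inl 2` (playing the roles of
`a', b', c'`), where `inl j` is joined to `inr (0, j)`. -/
def threeComb : SimpleGraph (Fin 3 ⊕ (Fin 1 × Fin 3)) :=
  SimpleGraph.fromRel fun x y =>
    match x, y with
    | Sum.inl j, Sum.inr (_, jj) => j = jj
    | Sum.inr (i, j), Sum.inr (ii, jj) => i = ii ∧ (jj : ℕ) = (j : ℕ) + 1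
    | _, _ => False

abbrev VV := Fin 3 ⊕ (Fin 1 × Fin 3)

def relP : VV → VV → Prop := fun x y =>
    match x, y with
    | Sum.inl j, Sum.inr (_, jj) => j = jj
    | Sum.inr (i, j), Sum.inr (ii, jj) => i = ii ∧ (jj : ℕ) = (j : ℕ) + 1
    | _, _ => False

instance : DecidableRel relP := fun x y =>
  match x, y with
  | Sum.inl j, Sum.inr (_, jj) => inferInstanceAs (Decidable (j = jj))
  | Sum.inr (i, j), Sum.inr (ii, jj) =>
      inferInstanceAs (Decidable (i = ii ∧ (jj : ℕ) = (j : ℕ) + 1))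
  | Sum.inl _, Sum.inl _ => inferInstanceAs (Decidable False)
  | Sum.inr _, Sum.inl _ => inferInstanceAs (Decidable False)

instance : DecidableRel threeComb.Adj := fun x y =>
  decidable_of_iff _ (SimpleGraph.fromRel_adj relP x y).symm

lemma edgesTouching_coe (F : Finset VV) :
    edgesTouching threeComb (↑F) =
      (Finset.univ.filter fun e : Sym2 VV =>
        e ∈ threeComb.edgeSet ∧ ∃ v ∈ F, v ∈ e).card := by
  rw [edgesTouching, ← Set.ncard_coe_finset]
  congr 1
  ext e
  simp

lemma rho_coe (F : Finset VV) :
    rho threeComb ↑F =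
      ((Finset.univ.filter fun e : Sym2 VV =>
        e ∈ threeComb.edgeSet ∧ ∃ v ∈ F, v ∈ e).card : ℝ) / (F.card : ℝ) := by
  rw [rho, edgesTouching_coe, Set.ncard_coe_finset]

lemma rho_ge (F : Finset VV) (hF : 0 < F.card)
    (h : 5 * F.card ≤ 3 * (Finset.univ.filter fun e : Sym2 VV =>
        e ∈ threeComb.edgeSet ∧ ∃ v ∈ F, v ∈ e).card) :
    (5 : ℝ) / 3 ≤ rho threeComb ↑F := by
  rw [rho_coe, div_le_div_iff₀ (by norm_num) (by exact_mod_cast hF)]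
  calc (5 : ℝ) * F.card = ((5 * F.card : ℕ) : ℝ) := by push_cast; ring
    _ ≤ ((3 * (Finset.univ.filter fun e : Sym2 VV =>
        e ∈ threeComb.edgeSet ∧ ∃ v ∈ F, v ∈ e).card : ℕ) : ℝ) := by exact_mod_cast h
    _ = _ := by push_cast; ring

lemma compl_eq : (Set.range (Sum.inl : Fin 3 → VV))ᶜ =
    ↑({Sum.inr (0,0), Sum.inr (0,1), Sum.inr (0,2)} : Finset VV) := by
  ext x
  cases x with
  | inl j => simp
  | inr p =>
    obtain ⟨i, j⟩ := p
    fin_cases i <;> fin_cases j <;> simp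

lemma hfull : rho threeComb ((Set.range (Sum.inl : Fin 3 → VV))ᶜ) = 5 / 3 := by
  rw [compl_eq, rho_coe]
  congr 1 <;> norm_cast <;> decide

/-- The rooted tree `(T₃, R)`, where `R = Set.range Sum.inl = {a', b', c'}` is the set of
leaves, is balanced (every nonempty `S ⊆ V(T₃) \ R` satisfies `ρ_S ≥ ρ_{T₃}`) and
`ρ_{T₃} = 5/3`. -/
theorem threeComb_balanced :
    (∀ S : Set (Fin 3 ⊕ (Fin 1 × Fin 3)),
      S ⊆ (Set.range Sum.inl)ᶜ → S.Nonempty →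
        rho threeComb ((Set.range Sum.inl)ᶜ) ≤ rho threeComb S) ∧
    rho threeComb ((Set.range Sum.inl)ᶜ) = 5 / 3 := by
  constructor
  · intro S hS hne
    rw [hfull]
    set b0 : VV := Sum.inr (0,0) with hb0
    set b1 : VV := Sum.inr (0,1) with hb1
    set b2 : VV := Sum.inr (0,2) with hb2
    have hmem : ∀ x ∈ S, x = b0 ∨ x = b1 ∨ x = b2 := by
      intro x hx
      have h' := hS hx
      cases x with
      | inl j => exact absurd (Set.mem_range_self j) h'
      | inr p =>
        obtain ⟨i, j⟩ := p
        fin_cases i <;> fin_cases j <;> simp [hb0, hb1, hb2]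
    by_cases h0 : b0 ∈ S <;> by_cases h1 : b1 ∈ S <;> by_cases h2 : b2 ∈ S
    · have hSeq : S = ↑({b0, b1, b2} : Finset VV) := by
        apply Set.Subset.antisymm
        · intro x hx; rcases hmem x hx with rfl | rfl | rfl <;> simp
        · intro x hx; simp at hx; rcases hx with rfl | rfl | rfl <;> assumption
      rw [hSeq]; exact rho_ge _ (by decide) (by decide)
    · have hSeq : S = ↑({b0, b1} : Finset VV) := by
        apply Set.Subset.antisymm
        · intro x hx
          rcases hmem x hx with rfl | rfl | rfl
          · simp
          · simp
          · exact absurd hx h2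
        · intro x hx; simp at hx; rcases hx with rfl | rfl <;> assumption
      rw [hSeq]; exact rho_ge _ (by decide) (by decide)
    · have hSeq : S = ↑({b0, b2} : Finset VV) := by
        apply Set.Subset.antisymm
        · intro x hx
          rcases hmem x hx with rfl | rfl | rfl
          · simp
          · exact absurd hx h1
          · simp
        · intro x hx; simp at hx; rcases hx with rfl | rfl <;> assumption
      rw [hSeq]; exact rho_ge _ (by decide) (by decide)
    · have hSeq : S = ↑({b0} : Finset VV) := by
        apply Set.Subset.antisymm
        · intro x hx
          rcases hmem x hx with rfl | rfl | rfl
          · simp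
          · exact absurd hx h1
          · exact absurd hx h2
        · intro x hx; simp at hx; subst hx; assumption
      rw [hSeq]; exact rho_ge _ (by decide) (by decide)
    · have hSeq : S = ↑({b1, b2} : Finset VV) := by
        apply Set.Subset.antisymm
        · intro x hx
          rcases hmem x hx with rfl | rfl | rfl
          · exact absurd hx h0
          · simp
          · simp
        · intro x hx; simp at hx; rcases hx with rfl | rfl <;> assumption
      rw [hSeq]; exact rho_ge _ (by decide) (by decide)
    · have hSeq : S = ↑({b1} : Finset VV) := by
        apply Set.Subset.antisymm
        · intro x hx
          rcases hmem x hx with rfl | rfl | rfl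
          · exact absurd hx h0
          · simp
          · exact absurd hx h2
        · intro x hx; simp at hx; subst hx; assumption
      rw [hSeq]; exact rho_ge _ (by decide) (by decide)
    · have hSeq : S = ↑({b2} : Finset VV) := by
        apply Set.Subset.antisymm
        · intro x hx
          rcases hmem x hx with rfl | rfl | rfl
          · exact absurd hx h0
          · exact absurd hx h1
          · simp
        · intro x hx; simp at hx; subst hx; assumption
      rw [hSeq]; exact rho_ge _ (by decide) (by decide)
    · obtain ⟨x, hx⟩ := hne
      rcases hmem x hx with rfl | rfl | rfl
      · exact absurd hx h0
      · exact absurd hx h1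
      · exact absurd hx h2
  · exact hfull
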